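/- Let L be a Heyting algebra and μ a fuzzy subset of L. Then the function μ′ : L → ℝ defined by μ′(x) = sup { min(μ(x₁), …, μ(xₙ)) : n ≥ 1, x₁, …, xₙ ∈ L, x ≤ x₁ ⊞ ⋯ ⊞ xₙ } is a fuzzy ideal of L. -/

import Mathlib

variable {L : Type*} [HeytingAlgebra L]

/-- `x ⊎ y := x* ⇨ y` where `x* = xᶜ = x ⇨ ⊥`. -/
def uplus (x y : L) : L := xᶜ ⇨ y

/-- `x ⊞ y := x* ⇨ (y*)*`. -/
def boxplus (x y : L) : L := xᶜ ⇨ yᶜᶜ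

/-- `x₁ ⊞ x₂ ⊞ ⋯ ⊞ xₙ` for a nonempty list `[x₁, …, xₙ]` (junk value `⊥` on `[]`). -/
def boxFold : List L → L
  | [] => ⊥
  | [a] => a
  | a :: l => boxplus a (boxFold l)

/-- `min(t₁, …, tₙ)` for a nonempty list `[t₁, …, tₙ]` of reals (junk value `1` on `[]`). -/
def minFold : List ℝ → ℝ
  | [] => 1
  | [a] => a
  | a :: l => min a (minFold l)

/-- A fuzzy ideal of `L`: a fuzzy subset (values in `[0,1]`) that is antitone and
satisfies `μ(x ⊎ y) ≥ min(μ(x), μ(y))`. -/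
def FuzzyIdeal (μ : L → ℝ) : Prop :=
  (∀ x, 0 ≤ μ x ∧ μ x ≤ 1) ∧
  (∀ x y, x ≤ y → μ y ≤ μ x) ∧
  (∀ x y, min (μ x) (μ y) ≤ μ (uplus x y))

/-- `μ′(x) = sup { min(μ(x₁), …, μ(xₙ)) : n ≥ 1, x ≤ x₁ ⊞ ⋯ ⊞ xₙ }`. -/
noncomputable def fuzzyGen (μ : L → ℝ) (x : L) : ℝ :=
  sSup {t : ℝ | ∃ l : List L, l ≠ [] ∧ x ≤ boxFold l ∧ t = minFold (l.map μ)}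

lemma boxplus_eq (a b : L) : boxplus a b = (a ⊔ b)ᶜᶜ := by
  unfold boxplus
  conv_rhs => rw [compl_sup, ← himp_bot, ← himp_himp, himp_bot]

lemma sup_cc_left (u v : L) : (uᶜᶜ ⊔ v)ᶜᶜ = (u ⊔ v)ᶜᶜ :=
  congrArg compl (by rw [compl_sup, compl_sup, compl_compl_compl])

lemma sup_cc_right (u v : L) : (u ⊔ vᶜᶜ)ᶜᶜ = (u ⊔ v)ᶜᶜ :=
  congrArg compl (by rw [compl_sup, compl_sup, compl_compl_compl])

lemma boxplus_assoc (a b c : L) : boxplus (boxplus a b) c = boxplus a (boxplus b c) := by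
  simp only [boxplus_eq, sup_cc_left, sup_cc_right, sup_assoc]

lemma boxplus_mono {a b c d : L} (hab : a ≤ b) (hcd : c ≤ d) :
    boxplus a c ≤ boxplus b d :=
  himp_le_himp (compl_le_compl hab) (compl_le_compl (compl_le_compl hcd))

lemma uplus_le_boxplus (x y : L) : uplus x y ≤ boxplus x y :=
  himp_le_himp_left le_compl_compl

lemma boxFold_cons (a : L) {l : List L} (hl : l ≠ []) :
    boxFold (a :: l) = boxplus a (boxFold l) := by
  cases l with
  | nil => exact absurd rfl hl
  | cons b m => rfl

lemma minFold_cons (a : ℝ) {l : List ℝ} (hl : l ≠ []) :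
    minFold (a :: l) = min a (minFold l) := by
  cases l with
  | nil => exact absurd rfl hl
  | cons b m => rfl

lemma boxFold_append {l m : List L} (hl : l ≠ []) (hm : m ≠ []) :
    boxFold (l ++ m) = boxplus (boxFold l) (boxFold m) := by
  induction l with
  | nil => exact absurd rfl hl
  | cons a l ih =>
    cases l with
    | nil => exact boxFold_cons a hm
    | cons b t =>
      have h1 : (b :: t) ≠ [] := by simp
      have h2 : (b :: t) ++ m ≠ [] := by simp
      rw [List.cons_append, boxFold_cons a h2, ih h1, boxFold_cons a h1,
        boxplus_assoc]

lemma minFold_append {l m : List ℝ} (hl : l ≠ []) (hm : m ≠ []) :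
    minFold (l ++ m) = min (minFold l) (minFold m) := by
  induction l with
  | nil => exact absurd rfl hl
  | cons a l ih =>
    cases l with
    | nil => exact minFold_cons a hm
    | cons b t =>
      have h1 : (b :: t) ≠ [] := by simp
      have h2 : (b :: t) ++ m ≠ [] := by simp
      rw [List.cons_append, minFold_cons a h2, ih h1, minFold_cons a h1,
        min_assoc]

lemma minFold_mem_bounds {l : List ℝ} (h : ∀ t ∈ l, 0 ≤ t ∧ t ≤ 1) :
    0 ≤ minFold l ∧ minFold l ≤ 1 := by
  induction l with
  | nil => simp [minFold]
  | cons a l ih =>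
    cases l with
    | nil => exact h a (by simp)
    | cons b t =>
      have h1 : (b :: t) ≠ [] := by simp
      rw [minFold_cons a h1]
      have ha := h a (by simp)
      have hrest := ih (fun t ht => h t (List.mem_cons_of_mem _ ht))
      constructor
      · exact le_min ha.1 hrest.1
      · exact min_le_of_left_le ha.2

theorem fuzzyGen_isFuzzyIdeal (μ : L → ℝ) (hμ : ∀ x, 0 ≤ μ x ∧ μ x ≤ 1) :
    FuzzyIdeal (fuzzyGen μ) := by
  set S : L → Set ℝ := fun x =>
    {t : ℝ | ∃ l : List L, l ≠ [] ∧ x ≤ boxFold l ∧ t = minFold (l.map μ)} with hS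
  have hbounds : ∀ x, ∀ t ∈ S x, 0 ≤ t ∧ t ≤ 1 := by
    rintro x t ⟨l, -, -, rfl⟩
    exact minFold_mem_bounds
      (by simp only [List.mem_map]; rintro t ⟨a, -, rfl⟩; exact hμ a)
  have hmem : ∀ x, μ x ∈ S x := fun x => ⟨[x], by simp, le_refl _, rfl⟩
  have hne : ∀ x, (S x).Nonempty := fun x => ⟨μ x, hmem x⟩
  have hbdd : ∀ x, BddAbove (S x) := fun x => ⟨1, fun t ht => (hbounds x t ht).2⟩
  have hgen : ∀ x, fuzzyGen μ x = sSup (S x) := fun x => rfl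
  refine ⟨fun x => ?_, fun x y hxy => ?_, fun x y => ?_⟩
  · rw [hgen]
    exact ⟨le_trans (hμ x).1 (le_csSup (hbdd x) (hmem x)),
      csSup_le (hne x) (fun t ht => (hbounds x t ht).2)⟩
  · rw [hgen, hgen]
    refine csSup_le_csSup (hbdd x) (hne y) ?_
    rintro t ⟨l, hl, hyl, rfl⟩
    exact ⟨l, hl, le_trans hxy hyl, rfl⟩
  · simp only [hgen]
    refine le_of_forall_lt (fun w hw => ?_)
    obtain ⟨a, ha, hwa⟩ := exists_lt_of_lt_csSup (hne x) (lt_of_lt_of_le hw (min_le_left _ _))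
    obtain ⟨b, hb, hwb⟩ := exists_lt_of_lt_csSup (hne y) (lt_of_lt_of_le hw (min_le_right _ _))
    obtain ⟨l, hl, hxl, rfl⟩ := ha
    obtain ⟨m, hm, hym, rfl⟩ := hb
    have hmemC : min (minFold (l.map μ)) (minFold (m.map μ)) ∈ S (uplus x y) := by
      refine ⟨l ++ m, by simp [hl], ?_, ?_⟩
      · calc uplus x y ≤ boxplus x y := uplus_le_boxplus x y
          _ ≤ boxplus (boxFold l) (boxFold m) := boxplus_mono hxl hym
          _ = boxFold (l ++ m) := (boxFold_append hl hm).symm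
      · rw [List.map_append, minFold_append (by simpa using hl) (by simpa using hm)]
    exact lt_of_lt_of_le (lt_min hwa hwb) (le_csSup (hbdd _) hmemC)
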